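/- Let A = (a_{ij}) ∈ GL_N(ℤ_p) be any (deterministic) matrix, let λ, μ be weakly decreasing N-tuples with entries in ℤ_{≥0} ∪ {∞}, let ν := SN(diag(p^λ)·A·diag(p^μ)), fix 1 ≤ r ≤ N, and for r ≤ j ≤ N let v_j := (a_{ij} mod p)_{ℓ(λ) < i ≤ N} ∈ 𝔽_p^{N−ℓ(λ)}. Then: (1) if the set {v_j : r ≤ j ≤ N} is linearly independent over 𝔽_p, then ν_j = μ_j for all r ≤ j ≤ N; (2) if moreover μ_{r−1} > μ_r (with μ_0 := ∞), then conversely ν_j = μ_j for all r ≤ j ≤ N implies that {v_j : r ≤ j ≤ N} is linearly independent over 𝔽_p. -/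

import Mathlib

/-!
Statement 13 (Lemma `nonsingular_submatrix`): let `A ∈ GL_N(ℤ_p)`,
`ν := SN(diag(p^λ)·A·diag(p^μ))`, `1 ≤ r ≤ N`, and for `r ≤ j ≤ N` let
`v_j := (a_{ij} mod p)_{ℓ(λ) < i ≤ N} ∈ 𝔽_p^{N−ℓ(λ)}`.  Then:
(1) if `{v_j : r ≤ j ≤ N}` is linearly independent then `ν_j = μ_j` for all `r ≤ j ≤ N`;
(2) if moreover `μ_{r−1} > μ_r` (with `μ_0 := ∞`), the converse holds.
-/

noncomputable section

/-- `p^a ∈ ℤ_p` for `a ∈ ℕ ∪ {∞}`, with the convention `p^∞ = 0`. -/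
def zppow (p : ℕ) [Fact p.Prime] (a : WithTop ℕ) : ℤ_[p] :=
  if h : a = ⊤ then 0 else (p : ℤ_[p]) ^ (a.untop h)

/-- The diagonal matrix `diag(p^{s₁},…,p^{s_N})` over `ℤ_p`. -/
def snDiag (p : ℕ) [Fact p.Prime] (N : ℕ) (s : Fin N → WithTop ℕ) :
    Matrix (Fin N) (Fin N) ℤ_[p] :=
  Matrix.diagonal fun i => zppow p (s i)

/-- `s` is the (weakly decreasing) tuple of singular numbers of `A ∈ Mat_N(ℤ_p)`. -/
def IsSN (p : ℕ) [Fact p.Prime] (N : ℕ) (A : Matrix (Fin N) (Fin N) ℤ_[p])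
    (s : Fin N → WithTop ℕ) : Prop :=
  Antitone s ∧ ∃ U V : (Matrix (Fin N) (Fin N) ℤ_[p])ˣ, A = U.val * snDiag p N s * V.val

namespace Stmt13

variable {p : ℕ} [hp : Fact p.Prime]

/-! ### norms of `p`-powers -/

/-- norm (as an `ℝ≥0`) of `zppow`. -/
def F (p : ℕ) [Fact p.Prime] (a : WithTop ℕ) : NNReal := ‖zppow p a‖₊

lemma zppow_coe (n : ℕ) : zppow p (WithTop.some n) = (p : ℤ_[p]) ^ n := by
  rw [zppow, dif_neg (by exact WithTop.coe_ne_top)]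
  rfl

lemma zppow_zero' : zppow p (0 : WithTop ℕ) = 1 := by
  have : (0 : WithTop ℕ) = WithTop.some 0 := rfl
  rw [this, zppow_coe, pow_zero]

lemma F_zero : F p 0 = 1 := by
  simp [F, zppow_zero']

lemma F_top : F p ⊤ = 0 := by simp [F, zppow]

lemma nnnorm_p_lt_one : ‖(p : ℤ_[p])‖₊ < 1 := by
  have h2 : (1:ℝ) < (p:ℝ) := by exact_mod_cast hp.out.one_lt
  have : ‖(p : ℤ_[p])‖ < 1 := by
    rw [PadicInt.norm_p, inv_lt_one_iff₀]; right; exact h2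
  rwa [← coe_nnnorm, ← NNReal.coe_one, NNReal.coe_lt_coe] at this

lemma nnnorm_p_pos : 0 < ‖(p : ℤ_[p])‖₊ := by
  simp only [pos_iff_ne_zero, ne_eq, nnnorm_eq_zero]
  exact_mod_cast hp.out.ne_zero

lemma F_coe (n : ℕ) : F p (WithTop.some n) = ‖(p : ℤ_[p])‖₊ ^ n := by
  rw [F, zppow_coe]
  induction n with
  | zero => simp
  | succ m ih =>
    rw [pow_succ, pow_succ, ← ih]
    ext
    push_cast [coe_nnnorm]
    exact norm_mul _ _

lemma F_strictAnti : StrictAnti (F p) := by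
  intro a b hab
  induction b with
  | top =>
    rw [F_top]
    lift a to ℕ using hab.ne
    rw [F_coe]
    exact pow_pos nnnorm_p_pos _
  | coe m =>
    lift a to ℕ using hab.ne_top
    rw [F_coe, F_coe]
    exact pow_lt_pow_right_of_lt_one₀ nnnorm_p_pos nnnorm_p_lt_one (by exact_mod_cast hab)

lemma F_le_one (a : WithTop ℕ) : F p a ≤ 1 := by
  rw [← F_zero (p := p)]
  rcases eq_or_ne a 0 with rfl | h
  · exact le_refl _
  · exact (F_strictAnti ((zero_le : (0:WithTop ℕ) ≤ a).lt_of_ne (Ne.symm h))).le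

lemma F_eq_zero_iff {a : WithTop ℕ} : F p a = 0 ↔ a = ⊤ := by
  constructor
  · intro h
    by_contra hne
    lift a to ℕ using hne
    rw [F_coe] at h
    exact absurd h (pow_pos nnnorm_p_pos _).ne'
  · rintro rfl; exact F_top

lemma F_pos_iff {a : WithTop ℕ} : 0 < F p a ↔ a ≠ ⊤ := by
  rw [pos_iff_ne_zero, ne_eq, F_eq_zero_iff]

lemma F_mono {a b : WithTop ℕ} (h : a ≤ b) : F p b ≤ F p a := by
  rcases eq_or_lt_of_le h with rfl | h
  · exact le_refl _
  · exact (F_strictAnti h).le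

/-! ### `p`-adic norm helpers -/

lemma pnn_mul (x y : ℤ_[p]) : ‖x * y‖₊ = ‖x‖₊ * ‖y‖₊ := by
  ext; push_cast [coe_nnnorm]; exact norm_mul x y

lemma pnn_prod {α : Type*} (s : Finset α) (f : α → ℤ_[p]) :
    ‖∏ x ∈ s, f x‖₊ = ∏ x ∈ s, ‖f x‖₊ := by
  classical
  induction s using Finset.cons_induction with
  | empty => simp
  | cons a s ha ih => rw [Finset.prod_cons, Finset.prod_cons, pnn_mul, ih]

lemma pnn_le_one (x : ℤ_[p]) : ‖x‖₊ ≤ 1 := by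
  have := PadicInt.norm_le_one x
  rwa [← coe_nnnorm, ← NNReal.coe_one, NNReal.coe_le_coe] at this

lemma pnn_sum_le {α : Type*} (s : Finset α) (f : α → ℤ_[p]) (c : NNReal)
    (h : ∀ x ∈ s, ‖f x‖₊ ≤ c) : ‖∑ x ∈ s, f x‖₊ ≤ c := by
  classical
  induction s using Finset.cons_induction with
  | empty => simp
  | cons a s ha ih =>
    rw [Finset.sum_cons]
    have hna : ‖f a + ∑ x ∈ s, f x‖ ≤ max ‖f a‖ ‖∑ x ∈ s, f x‖ :=
      PadicInt.nonarchimedean _ _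
    have hna' : ‖f a + ∑ x ∈ s, f x‖₊ ≤ max ‖f a‖₊ ‖∑ x ∈ s, f x‖₊ := by
      rw [← NNReal.coe_le_coe]
      push_cast [coe_nnnorm]
      exact hna
    refine hna'.trans (max_le (h a (Finset.mem_cons_self a s)) ?_)
    exact ih fun x hx => h x (Finset.mem_cons_of_mem hx)

lemma pnn_lt_one_iff (x : ℤ_[p]) : ‖x‖₊ < 1 ↔ PadicInt.toZMod x = 0 := by
  have h1 : ‖x‖ < 1 ↔ x ∈ IsLocalRing.maximalIdeal ℤ_[p] := by
    rw [IsLocalRing.mem_maximalIdeal, PadicInt.mem_nonunits]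
  have h2 : (PadicInt.toZMod x = 0) ↔ x ∈ RingHom.ker (PadicInt.toZMod (p := p)) :=
    RingHom.mem_ker.symm
  rw [h2, PadicInt.ker_toZMod, ← h1]
  rw [← coe_nnnorm, ← NNReal.coe_one, NNReal.coe_lt_coe]

lemma pnn_eq_one_iff (x : ℤ_[p]) : ‖x‖₊ = 1 ↔ PadicInt.toZMod x ≠ 0 := by
  rw [ne_eq, ← pnn_lt_one_iff, not_lt]
  constructor
  · intro h; rw [h]
  · intro h; exact le_antisymm (pnn_le_one x) h

/-! ### determinant expansion and minors -/

/-- Row-expansion of the determinant of a submatrix of a product. -/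
lemma det_submatrix_mul {R : Type*} [CommRing R] {k : ℕ} {α β γ : Type*}
    [Fintype β] [DecidableEq β]
    (M : Matrix α β R) (B : Matrix β γ R) (s : Fin k → α) (t : Fin k → γ) :
    ((M * B).submatrix s t).det
      = ∑ g : Fin k → β, (∏ i, M (s i) (g i)) * (B.submatrix g t).det := by
  classical
  have hrows : ((M * B).submatrix s t : Fin k → Fin k → R)
      = fun i => ∑ l : β, M (s i) l • (fun j => B l (t j)) := by
    ext i j
    simp [Matrix.mul_apply, Matrix.submatrix_apply]
  have h1 : ((M * B).submatrix s t).det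
      = (Matrix.detRowAlternating : AlternatingMap R (Fin k → R) R (Fin k))
          ((M * B).submatrix s t) := rfl
  rw [h1, hrows]
  rw [show ((Matrix.detRowAlternating : AlternatingMap R (Fin k → R) R (Fin k))
      (fun i => ∑ l : β, M (s i) l • (fun j => B l (t j))))
    = (Matrix.detRowAlternating : AlternatingMap R (Fin k → R) R (Fin k)).toMultilinearMap
      (fun i => ∑ l : β, M (s i) l • (fun j => B l (t j))) from rfl]
  rw [MultilinearMap.map_sum]
  refine Finset.sum_congr rfl fun g _ => ?_
  rw [show ((Matrix.detRowAlternating : AlternatingMap R (Fin k → R) R (Fin k)).toMultilinearMap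
      (fun i => M (s i) (g i) • (fun j => B (g i) (t j))))
    = (Matrix.detRowAlternating : AlternatingMap R (Fin k → R) R (Fin k)).toMultilinearMap
      (fun i => M (s i) (g i) • (fun j => (B.submatrix g t) i j)) from rfl]
  rw [MultilinearMap.map_smul_univ]
  rw [smul_eq_mul]
  rfl

/-- sup of nnnorms of `k × k` minors. -/
def mnorm {N : ℕ} (p : ℕ) [Fact p.Prime] (B : Matrix (Fin N) (Fin N) ℤ_[p]) (k : ℕ) : NNReal :=
  Finset.univ.sup fun st : (Fin k → Fin N) × (Fin k → Fin N) =>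
    ‖(B.submatrix st.1 st.2).det‖₊

lemma minor_le_mnorm {N : ℕ} (B : Matrix (Fin N) (Fin N) ℤ_[p]) (k : ℕ)
    (s t : Fin k → Fin N) : ‖(B.submatrix s t).det‖₊ ≤ mnorm p B k := by
  unfold mnorm
  have := Finset.le_sup (α := NNReal) (β := (Fin k → Fin N) × (Fin k → Fin N))
    (f := fun st => ‖(B.submatrix st.1 st.2).det‖₊) (b := (s, t)) (Finset.mem_univ _)
  simpa using this

lemma mnorm_le {N : ℕ} (B : Matrix (Fin N) (Fin N) ℤ_[p]) (k : ℕ) (c : NNReal)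
    (h : ∀ s t : Fin k → Fin N, ‖(B.submatrix s t).det‖₊ ≤ c) : mnorm p B k ≤ c := by
  unfold mnorm
  exact Finset.sup_le fun st _ => h st.1 st.2

lemma mnorm_lt {N : ℕ} (B : Matrix (Fin N) (Fin N) ℤ_[p]) (k : ℕ) (c : NNReal) (hc : 0 < c)
    (h : ∀ s t : Fin k → Fin N, ‖(B.submatrix s t).det‖₊ < c) : mnorm p B k < c := by
  unfold mnorm
  exact (Finset.sup_lt_iff hc).mpr fun st _ => h st.1 st.2

lemma mnorm_mul_le_right {N : ℕ} (M B : Matrix (Fin N) (Fin N) ℤ_[p]) (k : ℕ) :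
    mnorm p (M * B) k ≤ mnorm p B k := by
  refine mnorm_le _ _ _ fun s t => ?_
  rw [det_submatrix_mul]
  refine pnn_sum_le _ _ _ fun g _ => ?_
  rw [pnn_mul]
  calc ‖∏ i, M (s i) (g i)‖₊ * ‖(B.submatrix g t).det‖₊
      ≤ 1 * mnorm p B k := mul_le_mul' (pnn_le_one _) (minor_le_mnorm B k g t)
    _ = mnorm p B k := one_mul _

lemma mnorm_transpose {N : ℕ} (B : Matrix (Fin N) (Fin N) ℤ_[p]) (k : ℕ) :
    mnorm p B.transpose k = mnorm p B k := by
  have key : ∀ (C : Matrix (Fin N) (Fin N) ℤ_[p]),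
      mnorm p C.transpose k ≤ mnorm p C k := by
    intro C
    refine mnorm_le _ _ _ fun s t => ?_
    have : (C.transpose.submatrix s t) = (C.submatrix t s).transpose := by
      ext i j; simp [Matrix.submatrix_apply]
    rw [this, Matrix.det_transpose]
    exact minor_le_mnorm C k t s
  refine le_antisymm (key B) ?_
  have := key B.transpose
  rwa [Matrix.transpose_transpose] at this

lemma mnorm_mul_le_left {N : ℕ} (B M : Matrix (Fin N) (Fin N) ℤ_[p]) (k : ℕ) :
    mnorm p (B * M) k ≤ mnorm p B k := by
  rw [← mnorm_transpose (B * M), Matrix.transpose_mul, ← mnorm_transpose B]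
  exact mnorm_mul_le_right _ _ _

lemma mnorm_unit_mul {N : ℕ} (U : (Matrix (Fin N) (Fin N) ℤ_[p])ˣ)
    (B : Matrix (Fin N) (Fin N) ℤ_[p]) (k : ℕ) :
    mnorm p (U.val * B) k = mnorm p B k := by
  refine le_antisymm (mnorm_mul_le_right _ _ _) ?_
  have : B = (↑U⁻¹ : Matrix (Fin N) (Fin N) ℤ_[p]) * (U.val * B) := by
    rw [← mul_assoc]; simp
  conv_lhs => rw [this]
  exact mnorm_mul_le_right _ _ _

lemma mnorm_mul_unit {N : ℕ} (V : (Matrix (Fin N) (Fin N) ℤ_[p])ˣ)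
    (B : Matrix (Fin N) (Fin N) ℤ_[p]) (k : ℕ) :
    mnorm p (B * V.val) k = mnorm p B k := by
  refine le_antisymm (mnorm_mul_le_left _ _ _) ?_
  have : B = (B * V.val) * (↑V⁻¹ : Matrix (Fin N) (Fin N) ℤ_[p]) := by
    rw [mul_assoc]; simp
  conv_lhs => rw [this]
  exact mnorm_mul_le_left _ _ _

/-! ### diagonal submatrices -/

lemma diag_mul_submatrix {R : Type*} [CommRing R] {N k : ℕ}
    (d : Fin N → R) (X : Matrix (Fin N) (Fin N) R) (s t : Fin k → Fin N) :
    ((Matrix.diagonal d * X).submatrix s t)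
      = Matrix.diagonal (fun i => d (s i)) * (X.submatrix s t) := by
  ext i j
  rw [Matrix.submatrix_apply, Matrix.diagonal_mul, Matrix.diagonal_mul, Matrix.submatrix_apply]

lemma mul_diag_submatrix {R : Type*} [CommRing R] {N k : ℕ}
    (d : Fin N → R) (X : Matrix (Fin N) (Fin N) R) (s t : Fin k → Fin N) :
    ((X * Matrix.diagonal d).submatrix s t)
      = (X.submatrix s t) * Matrix.diagonal (fun j => d (t j)) := by
  ext i j
  rw [Matrix.submatrix_apply, Matrix.mul_diagonal, Matrix.mul_diagonal, Matrix.submatrix_apply]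

/-! ### sorted subsets -/

lemma strictMono_nat_le {k N : ℕ} (f : Fin k → Fin N) (hf : StrictMono f) (i : Fin k) :
    (i : ℕ) ≤ (f i : ℕ) := by
  obtain ⟨n, hn⟩ := i
  induction n with
  | zero => exact Nat.zero_le _
  | succ m ih =>
    have hm : m < k := by omega
    have h1 : f ⟨m, hm⟩ < f ⟨m + 1, hn⟩ := hf (by simp [Fin.lt_def])
    have h2 := ih hm
    simp only [Fin.lt_def] at h1
    simp only [Fin.val_mk] at h1 h2 ⊢
    omega

lemma strictMono_le_bound {k N : ℕ} (f : Fin k → Fin N) (hf : StrictMono f) (i : Fin k) :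
    (f i : ℕ) ≤ N - k + i := by
  set g : Fin k → Fin N := fun j => (f j.rev).rev with hg
  have hgm : StrictMono g := by
    intro a b hab
    simp only [hg]
    rw [Fin.rev_lt_rev]
    exact hf (by rwa [Fin.rev_lt_rev])
  have := strictMono_nat_le g hgm i.rev
  simp only [hg, Fin.rev_rev, Fin.val_rev] at this
  have hi := i.2
  have hfi := (f i).2
  omega

lemma prod_le_topk {N : ℕ} (w : Fin N → NNReal) (hw : Monotone w)
    (S : Finset (Fin N)) {k : ℕ} (hcard : S.card = k) (hk : k ≤ N) :
    ∏ x ∈ S, w x ≤ ∏ i : Fin k, w ⟨N - k + (i : ℕ), by omega⟩ := by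
  classical
  set e := S.orderEmbOfFin hcard with he
  have h1 : ∏ x ∈ S, w x = ∏ i : Fin k, w (e i) := by
    rw [← Finset.prod_coe_sort S w]
    exact (Fintype.prod_equiv (S.orderIsoOfFin hcard).toEquiv _ _
      (fun i => by rw [← Finset.coe_orderIsoOfFin_apply]; rfl)).symm
  rw [h1]
  refine Finset.prod_le_prod' fun i _ => hw ?_
  exact strictMono_le_bound e (OrderEmbedding.strictMono e) i

/-! ### the length function -/

lemma antitone_filter_iff {N : ℕ} (lam : Fin N → WithTop ℕ) (hlam : Antitone lam)
    (i : Fin N) :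
    (i : ℕ) < (Finset.univ.filter fun i : Fin N => 1 ≤ lam i).card ↔ 1 ≤ lam i := by
  classical
  set S := Finset.univ.filter fun i : Fin N => 1 ≤ lam i with hS
  have hmem : ∀ j : Fin N, j ∈ S ↔ 1 ≤ lam j := by
    intro j; simp [hS]
  constructor
  · intro h
    by_contra hni
    have hsub : S ⊆ Finset.Iio i := by
      intro j hj
      rw [Finset.mem_Iio]
      by_contra hji
      push_neg at hji
      exact hni (le_trans ((hmem j).mp hj) (hlam hji))
    have := Finset.card_le_card hsub
    rw [Fin.card_Iio] at this
    omega
  · intro h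
    have hsub : Finset.Iic i ⊆ S := by
      intro j hj
      rw [Finset.mem_Iic] at hj
      exact (hmem j).mpr (le_trans h (hlam hj))
    have := Finset.card_le_card hsub
    rw [Fin.card_Iic] at this
    omega

lemma lam_eq_zero_of_ge {N : ℕ} (lam : Fin N → WithTop ℕ) (hlam : Antitone lam)
    {L : ℕ} (hL : L = (Finset.univ.filter fun i : Fin N => 1 ≤ lam i).card)
    (i : Fin N) (h : L ≤ (i : ℕ)) : lam i = 0 := by
  have hiff := antitone_filter_iff lam hlam i
  rw [← hL] at hiff
  have h2 : ¬ (1 ≤ lam i) := by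
    intro hc
    have := hiff.mpr hc
    omega
  by_contra h0
  exact h2 (ENat.one_le_iff_ne_zero.mpr h0)

/-! ### linear algebra over the residue field -/

lemma exists_good_rows {K : Type*} [Field K] {ι : Type*} [Fintype ι] [DecidableEq ι]
    {k : ℕ} (M0 : Matrix ι (Fin k) K)
    (hLI : LinearIndependent K (fun j : Fin k => fun i : ι => M0 i j)) :
    ∃ g : Fin k → ι, (M0.submatrix g id).det ≠ 0 := by
  classical
  have hker : LinearMap.ker (Matrix.mulVecLin M0) = ⊥ := by
    rw [LinearMap.ker_eq_bot']
    intro c hc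
    have hsum : ∑ j : Fin k, c j • (fun i : ι => M0 i j) = 0 := by
      funext i
      have : (M0.mulVecLin c) i = 0 := by rw [hc]; rfl
      simpa [Matrix.mulVecLin_apply, Matrix.mulVec, dotProduct,
        Finset.sum_apply, mul_comm] using this
    funext j
    exact Fintype.linearIndependent_iff.mp hLI c hsum j
  obtain ⟨g, hg⟩ := LinearMap.exists_leftInverse_of_injective _ hker
  have hXM : (LinearMap.toMatrix' g) * M0 = 1 := by
    have h2 := congrArg LinearMap.toMatrix' hg
    rw [LinearMap.toMatrix'_comp, LinearMap.toMatrix'_id] at h2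
    rw [← Matrix.toLin'_apply', LinearMap.toMatrix'_toLin'] at h2
    exact h2
  by_contra hall
  push_neg at hall
  have h1 : (1 : K) = 0 := by
    have hdet : ((LinearMap.toMatrix' g * M0).submatrix id id).det = 1 := by
      rw [Matrix.submatrix_id_id, hXM, Matrix.det_one]
    rw [det_submatrix_mul] at hdet
    rw [Finset.sum_eq_zero (fun g' _ => by rw [hall g', mul_zero])] at hdet
    exact hdet.symm
  exact one_ne_zero h1

lemma det_zero_of_dep {K : Type*} [Field K] [DecidableEq K] {k : ℕ}
    (M1 : Matrix (Fin k) (Fin k) K) (c : Fin k → K) (hc0 : c ≠ 0)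
    (h : M1.mulVec c = 0) : M1.det = 0 :=
  Matrix.exists_mulVec_eq_zero_iff.mp ⟨c, hc0, h⟩

/-- explicit equivalence for the tail index set -/
def tailEquiv (N r : ℕ) (hr1 : 1 ≤ r) (hrN : r ≤ N) :
    Fin (N - r + 1) ≃ {j : Fin N // r ≤ (j : ℕ) + 1} where
  toFun i := ⟨⟨r - 1 + (i : ℕ), by have := i.2; omega⟩, by simp; omega⟩
  invFun j := ⟨(j.1 : ℕ) - (r - 1), by have := j.1.2; have := j.2; omega⟩
  left_inv i := by
    ext
    simp only [Fin.val_mk]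
    omega
  right_inv j := by
    have h1 := j.2
    ext
    simp
    omega

/-! ### tail products -/

/-- product of `F p` over the last `k` entries. -/
def Ttail (p : ℕ) [Fact p.Prime] (N : ℕ) (x : Fin N → WithTop ℕ) (k : ℕ) (hk : k ≤ N) :
    NNReal :=
  ∏ i : Fin k, F p (x ⟨N - k + (i : ℕ), by omega⟩)

lemma Ttail_succ (N : ℕ) (x : Fin N → WithTop ℕ) (k : ℕ) (hk : k + 1 ≤ N) :
    Ttail p N x (k+1) hk
      = F p (x ⟨N - (k+1), by omega⟩) * Ttail p N x k (by omega) := by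
  rw [Ttail, Ttail, Fin.prod_univ_succ]
  refine congrArg₂ (· * ·) ?_ ?_
  · apply congrArg (F p); apply congrArg x; apply Fin.ext; simp
  · refine Finset.prod_congr rfl fun i _ => ?_
    apply congrArg (F p); apply congrArg x; apply Fin.ext
    simp only [Fin.val_mk, Fin.val_succ]
    omega

lemma Ttail_congr (N : ℕ) (x : Fin N → WithTop ℕ) {k k' : ℕ} (h : k = k')
    (hk : k ≤ N) (hk' : k' ≤ N) : Ttail p N x k hk = Ttail p N x k' hk' := by
  subst h; rfl

/-! ### minors of the sandwich -/

lemma nnnorm_det_sandwich {N : ℕ} (lam mu : Fin N → WithTop ℕ)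
    (A : Matrix (Fin N) (Fin N) ℤ_[p]) {k : ℕ} (s t : Fin k → Fin N) :
    ‖(((snDiag p N lam * A * snDiag p N mu)).submatrix s t).det‖₊
      = (∏ i, F p (lam (s i)))
        * (‖(A.submatrix s t).det‖₊ * ∏ i, F p (mu (t i))) := by
  have h1 : (snDiag p N lam * A * snDiag p N mu).submatrix s t
      = Matrix.diagonal (fun i => zppow p (lam (s i)))
        * ((A.submatrix s t) * Matrix.diagonal (fun j => zppow p (mu (t j)))) := by
    rw [mul_assoc]
    rw [show snDiag p N lam = Matrix.diagonal (fun i => zppow p (lam i)) from rfl]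
    rw [diag_mul_submatrix]
    congr 1
    rw [show snDiag p N mu = Matrix.diagonal (fun i => zppow p (mu i)) from rfl]
    rw [mul_diag_submatrix]
  rw [h1, Matrix.det_mul, Matrix.det_mul, Matrix.det_diagonal, Matrix.det_diagonal]
  rw [pnn_mul, pnn_mul, pnn_prod, pnn_prod]
  rfl

lemma submatrix_snDiag_inj {N k : ℕ} (d : Fin N → WithTop ℕ) (e : Fin k → Fin N)
    (he : Function.Injective e) :
    (snDiag p N d).submatrix e e = Matrix.diagonal (fun i => zppow p (d (e i))) := by
  ext i j
  rw [Matrix.submatrix_apply]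
  rcases eq_or_ne i j with rfl | hij
  · rw [show snDiag p N d = Matrix.diagonal (fun i => zppow p (d i)) from rfl]
    rw [Matrix.diagonal_apply_eq, Matrix.diagonal_apply_eq]
  · rw [show snDiag p N d = Matrix.diagonal (fun i => zppow p (d i)) from rfl]
    rw [Matrix.diagonal_apply_ne _ (fun hc => hij (he hc)), Matrix.diagonal_apply_ne _ hij]

lemma mnorm_snDiag {N : ℕ} (d : Fin N → WithTop ℕ) (hd : Antitone d)
    {k : ℕ} (hk : k ≤ N) :
    mnorm p (snDiag p N d) k = Ttail p N d k hk := by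
  have hsand : snDiag p N d = snDiag p N d * 1 * snDiag p N (fun _ => 0) := by
    have h0 : snDiag p N (fun _ : Fin N => (0:WithTop ℕ)) = 1 := by
      rw [show snDiag p N (fun _ : Fin N => (0:WithTop ℕ))
          = Matrix.diagonal (fun _ : Fin N => zppow p 0) from rfl]
      rw [show (fun _ : Fin N => zppow p (0 : WithTop ℕ)) = fun _ : Fin N => (1:ℤ_[p]) from
        funext (fun _ => zppow_zero')]
      exact Matrix.diagonal_one
    rw [mul_one, h0, mul_one]
  refine le_antisymm (mnorm_le _ _ _ fun s t => ?_) ?_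
  · by_cases hs : Function.Injective s
    · conv_lhs => rw [hsand]
      rw [nnnorm_det_sandwich]
      have hb1 : ‖((1 : Matrix (Fin N) (Fin N) ℤ_[p]).submatrix s t).det‖₊ ≤ 1 :=
        pnn_le_one _
      have hb2 : (∏ i : Fin k, F p ((fun _ : Fin N => (0:WithTop ℕ)) (t i))) = 1 := by
        simp [F_zero]
      calc (∏ i, F p (d (s i)))
            * (‖((1 : Matrix (Fin N) (Fin N) ℤ_[p]).submatrix s t).det‖₊
              * ∏ i, F p ((fun _ : Fin N => (0:WithTop ℕ)) (t i)))
          ≤ (∏ i, F p (d (s i))) * (1 * 1) := by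
            exact mul_le_mul' (le_refl _) (mul_le_mul' hb1 (le_of_eq hb2))
        _ = ∏ i, F p (d (s i)) := by rw [mul_one, mul_one]
        _ = ∏ x ∈ Finset.image s Finset.univ, F p (d x) := by
            rw [Finset.prod_image (fun a _ b _ h => hs h)]
        _ ≤ Ttail p N d k hk := by
            refine prod_le_topk (fun j => F p (d j)) (fun a b hab => F_mono (hd hab)) _ ?_ hk
            rw [Finset.card_image_of_injective _ hs, Finset.card_univ, Fintype.card_fin]
    · obtain ⟨a, b, hab, hne⟩ := Function.not_injective_iff.mp hs
      have hrow : ((snDiag p N d).submatrix s t) a = ((snDiag p N d).submatrix s t) b := by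
        funext j
        rw [Matrix.submatrix_apply, Matrix.submatrix_apply, hab]
      rw [Matrix.det_zero_of_row_eq hne hrow]
      simp
  · set e : Fin k → Fin N := fun i => (⟨N - k + (i : ℕ), by omega⟩ : Fin N) with hedef
    have he : Function.Injective e := by
      intro a b hab
      have := congrArg Fin.val hab
      simp only [hedef, Fin.val_mk] at this
      exact Fin.ext (by omega)
    have hsub := submatrix_snDiag_inj (p := p) d e he
    have : ‖((snDiag p N d).submatrix e e).det‖₊ = Ttail p N d k hk := by
      rw [hsub, Matrix.det_diagonal, pnn_prod]
      rfl
    rw [← this]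
    exact minor_le_mnorm _ _ _ _

lemma mnorm_isSN {N : ℕ} (B : Matrix (Fin N) (Fin N) ℤ_[p]) (ν : Fin N → WithTop ℕ)
    (h : IsSN p N B ν) (k : ℕ) :
    mnorm p B k = mnorm p (snDiag p N ν) k := by
  obtain ⟨-, U, V, hB⟩ := h
  rw [hB, mnorm_mul_unit V, mnorm_unit_mul U]

end Stmt13

open Stmt13 in
theorem statement13 (p : ℕ) [Fact p.Prime] (N : ℕ) (hN : 1 ≤ N)
    (A : Matrix (Fin N) (Fin N) ℤ_[p]) (hA : IsUnit A.det)
    (lam mu : Fin N → WithTop ℕ) (hlam : Antitone lam) (hmu : Antitone mu)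
    (ν : Fin N → WithTop ℕ)
    (hν : IsSN p N (snDiag p N lam * A * snDiag p N mu) ν)
    (r : ℕ) (hr1 : 1 ≤ r) (hrN : r ≤ N)
    (L : ℕ) (hL : L = (Finset.univ.filter fun i : Fin N => 1 ≤ lam i).card)
    (v : {j : Fin N // r ≤ (j : ℕ) + 1} → {i : Fin N // L ≤ (i : ℕ)} → ZMod p)
    (hv : v = fun j i => PadicInt.toZMod (A i.val j.val)) :
    (LinearIndependent (ZMod p) v →
      ∀ j : Fin N, r ≤ (j : ℕ) + 1 → ν j = mu j)
    ∧
    (((r = 1 ∧ mu ⟨0, by omega⟩ < ⊤) ∨ (2 ≤ r ∧ mu ⟨r - 1, by omega⟩ < mu ⟨r - 2, by omega⟩)) →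
      (∀ j : Fin N, r ≤ (j : ℕ) + 1 → ν j = mu j) →
      LinearIndependent (ZMod p) v) := by
  have hanti : Antitone ν := hν.1
  set B := snDiag p N lam * A * snDiag p N mu with hBdef
  have hKN : N - r + 1 ≤ N := by omega
  -- the tail-product formula for mnorm of B in terms of ν
  have hTT : ∀ k (hk : k ≤ N), mnorm p B k = Ttail p N ν k hk := by
    intro k hk
    rw [mnorm_isSN B ν hν k, mnorm_snDiag ν hanti hk]
  -- the generic upper bound
  have E1 : ∀ k (hk : k ≤ N), mnorm p B k ≤ Ttail p N mu k hk := by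
    intro k hk
    refine mnorm_le _ _ _ fun s t => ?_
    by_cases htinj : Function.Injective t
    · rw [nnnorm_det_sandwich]
      have hb0 : (∏ i, F p (lam (s i))) ≤ 1 :=
        Finset.prod_le_one (fun i _ => zero_le) (fun i _ => F_le_one _)
      have hb1 : ‖(A.submatrix s t).det‖₊ ≤ 1 := pnn_le_one _
      have hb2 : (∏ i, F p (mu (t i))) ≤ Ttail p N mu k hk := by
        rw [← Finset.prod_image (f := fun x => F p (mu x)) (fun a _ b _ h => htinj h)]
        refine prod_le_topk (fun j => F p (mu j)) (fun a b hab => F_mono (hmu hab)) _ ?_ hk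
        rw [Finset.card_image_of_injective _ htinj, Finset.card_univ, Fintype.card_fin]
      calc (∏ i, F p (lam (s i))) * (‖(A.submatrix s t).det‖₊ * ∏ i, F p (mu (t i)))
          ≤ 1 * (1 * Ttail p N mu k hk) := mul_le_mul' hb0 (mul_le_mul' hb1 hb2)
        _ = Ttail p N mu k hk := by rw [one_mul, one_mul]
    · obtain ⟨a, b, hab, hne⟩ := Function.not_injective_iff.mp htinj
      have hcol : ∀ i, (B.submatrix s t) i a = (B.submatrix s t) i b := fun i => by
        rw [Matrix.submatrix_apply, Matrix.submatrix_apply, hab]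
      rw [Matrix.det_zero_of_column_eq hne hcol]
      simp
  constructor
  · -- part (1)
    intro hLI j hj
    -- lower bound from linear independence
    have E2 : ∀ k (hk1 : k ≤ N - r + 1),
        Ttail p N mu k (le_trans hk1 hKN) ≤ mnorm p B k := by
      intro k hk1
      have hk : k ≤ N := le_trans hk1 hKN
      set tc : Fin k → Fin N := fun i => (⟨N - k + (i : ℕ), by omega⟩ : Fin N) with htc
      have hcm : ∀ i : Fin k, r ≤ ((tc i : Fin N) : ℕ) + 1 := by
        intro i
        simp only [htc, Fin.val_mk]
        omega
      set cmap : Fin k → {j : Fin N // r ≤ (j : ℕ) + 1} := fun i => ⟨tc i, hcm i⟩ with hcmap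
      have hcm_inj : Function.Injective cmap := by
        intro a b hab
        have := congrArg (fun z => ((z : {j : Fin N // r ≤ (j : ℕ) + 1}).val : ℕ)) hab
        simp only [hcmap, htc, Fin.val_mk] at this
        exact Fin.ext (by omega)
      have hLI2 : LinearIndependent (ZMod p) (v ∘ cmap) := hLI.comp cmap hcm_inj
      set M0 : Matrix {i : Fin N // L ≤ (i : ℕ)} (Fin k) (ZMod p) :=
        Matrix.of fun i j => v (cmap j) i with hM0
      obtain ⟨g0, hg0⟩ := exists_good_rows M0 hLI2
      set s0 : Fin k → Fin N := fun i => ((g0 i).val : Fin N) with hs0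
      have hmap : (A.submatrix s0 tc).map (PadicInt.toZMod) = M0.submatrix g0 id := by
        ext i j
        simp only [Matrix.map_apply, Matrix.submatrix_apply, hM0, Matrix.of_apply, hv, id_eq]
        rfl
      have hdetA : ‖(A.submatrix s0 tc).det‖₊ = 1 := by
        rw [pnn_eq_one_iff, RingHom.map_det, RingHom.mapMatrix_apply, hmap]
        exact hg0
      have hlamz : ∀ i : Fin k, F p (lam (s0 i)) = 1 := fun i => by
        rw [lam_eq_zero_of_ge lam hlam hL _ (g0 i).2, F_zero]
      have hval : ‖(B.submatrix s0 tc).det‖₊ = Ttail p N mu k hk := by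
        rw [hBdef, nnnorm_det_sandwich, hdetA]
        rw [Finset.prod_eq_one (fun i _ => hlamz i), one_mul, one_mul]
        rfl
      rw [← hval]
      exact minor_le_mnorm _ _ _ _
    -- combine the bounds
    have key : ∀ k (hk1 : k ≤ N - r + 1),
        Ttail p N ν k (le_trans hk1 hKN) = Ttail p N mu k (le_trans hk1 hKN) := by
      intro k hk1
      have h1 := E1 k (le_trans hk1 hKN)
      have h2 := E2 k hk1
      have h3 := hTT k (le_trans hk1 hKN)
      rw [h3] at h1 h2
      exact le_antisymm h1 h2
    set k := N - 1 - (j : ℕ) with hkdef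
    have hjlt : (j : ℕ) < N := j.2
    have hk1 : k + 1 ≤ N - r + 1 := by omega
    have e1 := key (k+1) hk1
    have e0 := key k (by omega)
    rw [Ttail_succ, Ttail_succ] at e1
    have hidx : ∀ (x : Fin N → WithTop ℕ) (pf : N - (k+1) < N), x ⟨N - (k+1), pf⟩ = x j :=
      fun x pf => congrArg x (Fin.ext (by simp only [Fin.val_mk]; omega))
    rw [hidx ν (by omega), hidx mu (by omega)] at e1
    by_cases hmuj : mu j = ⊤
    · rw [hmuj, F_top, zero_mul] at e1
      have : ν j = ⊤ := by
        rcases mul_eq_zero.mp e1 with h | h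
        · exact F_eq_zero_iff.mp h
        · rw [Ttail] at h
          obtain ⟨i, -, hi⟩ := Finset.prod_eq_zero_iff.mp h
          have htop : ν ⟨N - k + (i : ℕ), by omega⟩ = ⊤ := F_eq_zero_iff.mp hi
          have hle : j ≤ (⟨N - k + (i : ℕ), by omega⟩ : Fin N) := by
            rw [Fin.le_def]
            simp only [Fin.val_mk]
            omega
          have := hanti hle
          rw [htop] at this
          exact top_le_iff.mp this
      rw [this, hmuj]
    · have hTpos : Ttail p N mu k (le_trans (by omega) hKN) ≠ 0 := by
        rw [Ttail, Finset.prod_ne_zero_iff]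
        intro i _
        rw [ne_eq, F_eq_zero_iff]
        intro htop
        apply hmuj
        have hle : j ≤ (⟨N - k + (i : ℕ), by omega⟩ : Fin N) := by
          rw [Fin.le_def]; simp only [Fin.val_mk]; omega
        have := hmu hle
        rw [htop] at this
        exact top_le_iff.mp this
      rw [e0] at e1
      have := mul_right_cancel₀ hTpos e1
      exact F_strictAnti.injective this
  · -- part (2)
    intro hgap hpt
    by_contra hnLI
    set k := N - r + 1 with hkdef
    have hk : k ≤ N := hKN
    have hmur_ne : mu ⟨r - 1, by omega⟩ ≠ ⊤ := by
      rcases hgap with ⟨hre, hlt⟩ | ⟨hr2, hlt⟩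
      · subst hre
        exact ne_top_of_lt hlt
      · exact ne_top_of_lt hlt
    have hmu_tail_ne : ∀ (j : Fin N), r - 1 ≤ (j : ℕ) → mu j ≠ ⊤ := by
      intro j hj htop
      apply hmur_ne
      have hle : (⟨r - 1, by omega⟩ : Fin N) ≤ j := by
        rw [Fin.le_def]; simpa using hj
      have := hmu hle
      rw [htop] at this
      exact top_le_iff.mp this
    set c := Ttail p N mu k hk with hcdef
    have hc : 0 < c := by
      rw [hcdef, Ttail, pos_iff_ne_zero, Finset.prod_ne_zero_iff]
      intro i _
      rw [ne_eq, F_eq_zero_iff]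
      exact hmu_tail_ne _ (by simp only [Fin.val_mk]; omega)
    have hBc : mnorm p B k = c := by
      rw [hTT k hk, hcdef, Ttail, Ttail]
      refine Finset.prod_congr rfl fun i _ => ?_
      refine congrArg (F p) (hpt _ ?_)
      simp only [Fin.val_mk]
      omega
    have hlt : mnorm p B k < c := by
      refine mnorm_lt _ _ _ hc fun s t => ?_
      by_cases htinj : Function.Injective t
      · rw [hBdef, nnnorm_det_sandwich]
        by_cases hall : ∀ i : Fin k, r - 1 ≤ (t i : ℕ)
        · have hP2 : (∏ i, F p (mu (t i))) ≤ c := by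
            rw [hcdef]
            rw [← Finset.prod_image (f := fun x => F p (mu x)) (fun a _ b _ h => htinj h)]
            refine prod_le_topk (fun j => F p (mu j)) (fun a b hab => F_mono (hmu hab)) _ ?_ hk
            rw [Finset.card_image_of_injective _ htinj, Finset.card_univ, Fintype.card_fin]
          by_cases hsL : ∀ i : Fin k, L ≤ (s i : ℕ)
          · -- all rows below L: use linear dependence
            set cmap' : Fin k → {j : Fin N // r ≤ (j : ℕ) + 1} :=
              fun i => ⟨t i, by have := hall i; omega⟩ with hcmap'
            have hinj : Function.Injective cmap' := by
              intro a b hab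
              exact htinj (congrArg Subtype.val hab)
            have hcard : Fintype.card {j : Fin N // r ≤ (j : ℕ) + 1} = k := by
              rw [hkdef, ← Fintype.card_fin (N - r + 1)]
              exact (Fintype.card_congr (tailEquiv N r hr1 hrN)).symm
            have hbij : Function.Bijective cmap' :=
              (Fintype.bijective_iff_injective_and_card cmap').mpr
                ⟨hinj, by rw [Fintype.card_fin, hcard]⟩
            obtain ⟨cc, hsum, j0, hj0⟩ := Fintype.not_linearIndependent_iff.mp hnLI
            set M1 : Matrix (Fin k) (Fin k) (ZMod p) :=
              Matrix.of fun a b => PadicInt.toZMod (A (s a) (t b)) with hM1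
            have hdep : M1.mulVec (cc ∘ cmap') = 0 := by
              funext a
              have h0 := congrFun hsum (⟨s a, hsL a⟩ : {i : Fin N // L ≤ (i : ℕ)})
              rw [Finset.sum_apply] at h0
              have h1 : ∑ jj : {j : Fin N // r ≤ (j : ℕ) + 1},
                  cc jj * v jj ⟨s a, hsL a⟩ = 0 := by
                rw [Finset.sum_congr rfl fun (jj : {j : Fin N // r ≤ (j : ℕ) + 1}) _ =>
                  (show cc jj * v jj ⟨s a, hsL a⟩ = (cc jj • v jj) ⟨s a, hsL a⟩ by simp)]
                exact h0
              have h2 := (Function.Bijective.sum_comp hbij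
                (fun jj => cc jj * v jj ⟨s a, hsL a⟩)).symm
              rw [h1] at h2
              simp only [Matrix.mulVec, dotProduct, Pi.zero_apply]
              have h3 : (∑ b, M1 a b * (cc ∘ cmap') b)
                  = ∑ b : Fin k, cc (cmap' b) * v (cmap' b) ⟨s a, hsL a⟩ :=
                Finset.sum_congr rfl fun b _ => by
                  simp only [Function.comp_apply, hM1, Matrix.of_apply, hcmap', hv]
                  ring
              rw [h3]
              exact h2.symm
            have hc'ne : (cc ∘ cmap') ≠ 0 := by
              obtain ⟨i0, hi0⟩ := hbij.2 j0
              intro hzero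
              apply hj0
              rw [← hi0]
              exact congrFun hzero i0
            have hdet0 : M1.det = 0 := det_zero_of_dep M1 _ hc'ne hdep
            have hdA : ‖(A.submatrix s t).det‖₊ < 1 := by
              rw [pnn_lt_one_iff, RingHom.map_det, RingHom.mapMatrix_apply,
                show (A.submatrix s t).map PadicInt.toZMod = M1 from by
                  ext a b; simp [Matrix.map_apply, hM1]]
              exact hdet0
            have hP1 : (∏ i, F p (lam (s i))) = 1 :=
              Finset.prod_eq_one fun i _ => by
                rw [lam_eq_zero_of_ge lam hlam hL _ (hsL i), F_zero]
            calc (∏ i, F p (lam (s i)))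
                  * (‖(A.submatrix s t).det‖₊ * ∏ i, F p (mu (t i)))
                ≤ (∏ i, F p (lam (s i))) * (‖(A.submatrix s t).det‖₊ * c) :=
                  mul_le_mul' le_rfl (mul_le_mul' le_rfl hP2)
              _ = ‖(A.submatrix s t).det‖₊ * c := by rw [hP1, one_mul]
              _ < 1 * c := mul_lt_mul_of_pos_right hdA hc
              _ = c := one_mul c
          · -- some row above L: extra factor of p
            push_neg at hsL
            obtain ⟨i1, hi1⟩ := hsL
            have h1lam : 1 ≤ lam (s i1) := by
              rw [hL] at hi1
              exact (antitone_filter_iff lam hlam (s i1)).mp hi1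
            have hF1 : F p (lam (s i1)) < 1 := by
              rw [← F_zero (p := p)]
              exact F_strictAnti (lt_of_lt_of_le zero_lt_one h1lam)
            have hP1lt : (∏ i, F p (lam (s i))) < 1 := by
              rw [← Finset.mul_prod_erase Finset.univ _ (Finset.mem_univ i1)]
              have hrest : (∏ i ∈ Finset.univ.erase i1, F p (lam (s i))) ≤ 1 :=
                Finset.prod_le_one (fun i _ => zero_le) (fun i _ => F_le_one _)
              calc F p (lam (s i1)) * ∏ i ∈ Finset.univ.erase i1, F p (lam (s i))
                  ≤ F p (lam (s i1)) * 1 := mul_le_mul' le_rfl hrest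
                _ = F p (lam (s i1)) := mul_one _
                _ < 1 := hF1
            calc (∏ i, F p (lam (s i)))
                  * (‖(A.submatrix s t).det‖₊ * ∏ i, F p (mu (t i)))
                ≤ (∏ i, F p (lam (s i))) * (1 * c) :=
                  mul_le_mul' le_rfl (mul_le_mul' (pnn_le_one _) hP2)
              _ = (∏ i, F p (lam (s i))) * c := by rw [one_mul]
              _ < 1 * c := mul_lt_mul_of_pos_right hP1lt hc
              _ = c := one_mul c
        · -- some column outside the tail
          push_neg at hall
          obtain ⟨i0, hi0⟩ := hall
          have hr2 : 2 ≤ r := by omega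
          have hcsplit : c = F p (mu ⟨r - 1, by omega⟩)
              * Ttail p N mu (k-1) (by omega) := by
            rw [hcdef, Ttail_congr N mu (show k = (k-1)+1 by omega) hk (by omega),
              Ttail_succ]
            refine congrArg₂ (· * ·) (congrArg (F p) (congrArg mu (Fin.ext ?_))) rfl
            simp only [Fin.val_mk]
            omega
          have hrest : (∏ i ∈ Finset.univ.erase i0, F p (mu (t i)))
              ≤ Ttail p N mu (k-1) (by omega) := by
            rw [← Finset.prod_image (f := fun x => F p (mu x))
              (fun a _ b _ h => htinj h)]
            refine prod_le_topk (fun j => F p (mu j)) (fun a b hab => F_mono (hmu hab))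
              _ ?_ (by omega)
            rw [Finset.card_image_of_injective _ htinj, Finset.card_erase_of_mem
              (Finset.mem_univ i0), Finset.card_univ, Fintype.card_fin]
          have hf0 : F p (mu (t i0)) < F p (mu ⟨r - 1, by omega⟩) := by
            rcases hgap with ⟨hre, -⟩ | ⟨-, hlt2⟩
            · omega
            · refine F_strictAnti ?_
              refine lt_of_lt_of_le hlt2 (hmu ?_)
              rw [Fin.le_def]
              simp only [Fin.val_mk]
              omega
          have hTpos : 0 < Ttail p N mu (k-1) (by omega) := by
            rw [Ttail, pos_iff_ne_zero, Finset.prod_ne_zero_iff]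
            intro i _
            rw [ne_eq, F_eq_zero_iff]
            exact hmu_tail_ne _ (by simp only [Fin.val_mk]; omega)
          have hP2lt : (∏ i, F p (mu (t i))) < c := by
            rw [← Finset.mul_prod_erase Finset.univ _ (Finset.mem_univ i0)]
            calc F p (mu (t i0)) * ∏ i ∈ Finset.univ.erase i0, F p (mu (t i))
                ≤ F p (mu (t i0)) * Ttail p N mu (k-1) (by omega) :=
                  mul_le_mul' le_rfl hrest
              _ < F p (mu ⟨r - 1, by omega⟩) * Ttail p N mu (k-1) (by omega) :=
                  mul_lt_mul_of_pos_right hf0 hTpos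
              _ = c := hcsplit.symm
          calc (∏ i, F p (lam (s i)))
                * (‖(A.submatrix s t).det‖₊ * ∏ i, F p (mu (t i)))
              ≤ 1 * (1 * ∏ i, F p (mu (t i))) :=
                mul_le_mul' (Finset.prod_le_one (fun i _ => zero_le)
                  (fun i _ => F_le_one _)) (mul_le_mul' (pnn_le_one _) le_rfl)
            _ = ∏ i, F p (mu (t i)) := by rw [one_mul, one_mul]
            _ < c := hP2lt
      · obtain ⟨a, b, hab, hne⟩ := Function.not_injective_iff.mp htinj
        have hcol : ∀ i, (B.submatrix s t) i a = (B.submatrix s t) i b := fun i => by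
          rw [Matrix.submatrix_apply, Matrix.submatrix_apply, hab]
        rw [Matrix.det_zero_of_column_eq hne hcol]
        simpa using hc
    rw [hBc] at hlt
    exact absurd hlt (lt_irrefl c)
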